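/- Let q > 0 be real and set f(k₁,k₂) = 3 + 2cos k₁ + 2cos k₂ + 2cos(k₁ − k₂). For integers t₁, t₂ define ε(t₁,t₂) = inf{ √(f(k) + q²) : k ∈ ℝ², t₁k₁ + t₂k₂ ∈ 2πℤ } − q. Then there exists a constant C > 0 such that for all coprime integers t₁, t₂ with t₁ − t₂ not divisible by 3, | ε(t₁,t₂) − π² / (6q(t₁² + t₁t₂ + t₂²)) | ≤ C · (t₁² + t₂²)^{−3/2}. -/

import Mathlib

open scoped Real

set_option maxHeartbeats 1000000

/-- The hexagonal-lattice symbol `f(k₁,k₂) = 3 + 2cos k₁ + 2cos k₂ + 2cos(k₁−k₂)`. -/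
noncomputable def hexSymbol (k₁ k₂ : ℝ) : ℝ :=
  3 + 2*Real.cos k₁ + 2*Real.cos k₂ + 2*Real.cos (k₁ - k₂)


lemma hex_sq (a b : ℝ) : hexSymbol a b
    = (1+Real.cos a+Real.cos b)^2 + (Real.sin a+Real.sin b)^2 := by
  unfold hexSymbol
  rw [Real.cos_sub]
  linear_combination -Real.sin_sq_add_cos_sq a - Real.sin_sq_add_cos_sq b

lemma hex_nonneg (a b : ℝ) : 0 ≤ hexSymbol a b := by
  rw [hex_sq]; positivity

lemma hex_period (a b : ℝ) (m₁ m₂ : ℤ) :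
    hexSymbol (a + 2*π*m₁) (b + 2*π*m₂) = hexSymbol a b := by
  unfold hexSymbol
  have h1 : a + 2*π*m₁ = a + m₁*(2*π) := by ring
  have h2 : b + 2*π*m₂ = b + m₂*(2*π) := by ring
  have h3 : (a + 2*π*m₁) - (b + 2*π*m₂) = (a-b) + ((m₁-m₂ : ℤ) : ℝ)*(2*π) := by push_cast; ring
  rw [h3, h1, h2, Real.cos_add_int_mul_two_pi, Real.cos_add_int_mul_two_pi,
    Real.cos_add_int_mul_two_pi]

lemma hex_even (a b : ℝ) : hexSymbol (-a) (-b) = hexSymbol a b := by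
  unfold hexSymbol
  rw [show -a - -b = -(a-b) by ring, Real.cos_neg, Real.cos_neg, Real.cos_neg]

lemma cs_ineq (t₁ t₂ p₁ p₂ : ℝ) :
    (t₁*p₁+t₂*p₂)^2 ≤ (p₁^2-p₁*p₂+p₂^2) * ((4/3)*(t₁^2+t₁*t₂+t₂^2)) := by
  nlinarith [sq_nonneg ((p₁-2*p₂)*t₁ + (2*p₁-p₂)*t₂)]

lemma sqrt_ub {q x : ℝ} (hq : 0 < q) (hx : 0 ≤ x) :
    Real.sqrt (x + q^2) ≤ q + x/(2*q) := by
  rw [show x + q^2 = (q + x/(2*q))^2 - (x/(2*q))^2 by field_simp; ring]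
  calc Real.sqrt ((q + x/(2*q))^2 - (x/(2*q))^2) ≤ Real.sqrt ((q + x/(2*q))^2) := by
        apply Real.sqrt_le_sqrt; nlinarith [sq_nonneg (x/(2*q))]
    _ = q + x/(2*q) := Real.sqrt_sq (by positivity)

lemma sqrt_lb {q x : ℝ} (hq : 0 < q) (hx : 0 ≤ x) :
    q + x/(2*q) - x^2/(8*q^3) ≤ Real.sqrt (x + q^2) := by
  set s := Real.sqrt (x + q^2) with hs
  have hsq : s^2 = x + q^2 := Real.sq_sqrt (by positivity)
  have hs0 : 0 ≤ s := Real.sqrt_nonneg _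
  have hge : q ≤ s := by nlinarith
  have key : 8*q^4 + 4*q^2*x - x^2 ≤ 8*q^3*s := by
    nlinarith [mul_nonneg (pow_nonneg (sub_nonneg.2 hge) 3) (by linarith : (0:ℝ) ≤ s+3*q)]
  calc q + x/(2*q) - x^2/(8*q^3) = (8*q^4+4*q^2*x-x^2)/(8*q^3) := by field_simp; ring
    _ ≤ s := by rw [div_le_iff₀ (by positivity)]; nlinarith


lemma cosB {x : ℝ} (h : |x| ≤ 1) : |Real.cos x - (1 - x^2/2)| ≤ (5/96)*|x|^4 := by
  have := Real.cos_bound h; linarith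

lemma sinB {x : ℝ} (h : |x| ≤ 1) : |Real.sin x - x| ≤ (7/32)*|x|^3 := by
  have h1 := Real.sin_bound h
  have h2 : |x|^4 ≤ |x|^3 := by
    calc |x|^4 = |x|^3*|x| := by ring
      _ ≤ |x|^3*1 := by apply mul_le_mul_of_nonneg_left h (by positivity)
      _ = |x|^3 := by ring
  have h3 : |x^3/6| = |x|^3/6 := by rw [abs_div, abs_pow]; norm_num
  calc |Real.sin x - x| = |(Real.sin x - (x - x^3/6)) + (-(x^3/6))| := by ring_nf
    _ ≤ |Real.sin x - (x - x^3/6)| + |(-(x^3/6))| := abs_add_le _ _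
    _ ≤ |x|^4*(5/96) + |x|^3/6 := by
      have h5 : |x|^5 ≤ |x|^4 := pow_le_pow_of_le_one (abs_nonneg _) h (by norm_num)
      have h6 : 0 ≤ |x|^4 := by positivity
      rw [abs_neg, h3]; linarith
    _ ≤ (7/32)*|x|^3 := by linarith

lemma sqrt3_lt : Real.sqrt 3 < 1.74 := by
  rw [show (1.74:ℝ) = Real.sqrt (1.74^2) by rw [Real.sqrt_sq]; norm_num]
  apply Real.sqrt_lt_sqrt (by norm_num); norm_num

lemma hex_expand (p₁ p₂ : ℝ) :
    hexSymbol (2*π/3 + p₁) (-(2*π/3) + p₂)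
      = 3 - Real.cos p₁ - Real.sqrt 3 * Real.sin p₁ - Real.cos p₂ + Real.sqrt 3 * Real.sin p₂
        - Real.cos (p₁-p₂) + Real.sqrt 3 * Real.sin (p₁-p₂) := by
  have hc : Real.cos (2*π/3) = -(1/2) := by
    rw [show 2*π/3 = π - π/3 by ring, Real.cos_pi_sub, Real.cos_pi_div_three]
  have hs : Real.sin (2*π/3) = Real.sqrt 3 / 2 := by
    rw [show 2*π/3 = π - π/3 by ring, Real.sin_pi_sub, Real.sin_pi_div_three]
  unfold hexSymbol
  have e1 : Real.cos (2*π/3 + p₁) = -(1/2)*Real.cos p₁ - (Real.sqrt 3/2)*Real.sin p₁ := by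
    rw [Real.cos_add, hc, hs]; try ring
  have e2 : Real.cos (-(2*π/3) + p₂) = -(1/2)*Real.cos p₂ + (Real.sqrt 3/2)*Real.sin p₂ := by
    rw [show -(2*π/3) + p₂ = -(2*π/3 - p₂) by ring, Real.cos_neg, Real.cos_sub, hc, hs]; try ring
  have e3 : Real.cos ((2*π/3 + p₁) - (-(2*π/3) + p₂))
      = -(1/2)*Real.cos (p₁-p₂) + (Real.sqrt 3/2)*Real.sin (p₁-p₂) := by
    have : (2*π/3 + p₁) - (-(2*π/3) + p₂) = (p₁ - p₂) + 2*π/3 + 2*π/3 := by ring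
    rw [this, Real.cos_add, Real.cos_add, Real.sin_add, hc, hs]
    have h3 : Real.sqrt 3 ^ 2 = 3 := Real.sq_sqrt (by norm_num)
    ring_nf
    linear_combination (-(Real.cos (p₁-p₂))/4) * h3
  rw [e1, e2, e3]; ring

lemma hex_taylor (p₁ p₂ : ℝ) (h₁ : |p₁| ≤ 1/2) (h₂ : |p₂| ≤ 1/2) :
    |hexSymbol (2*π/3 + p₁) (-(2*π/3) + p₂) - (p₁^2 - p₁*p₂ + p₂^2)|
      ≤ 5 * (max |p₁| |p₂|)^3 := by
  set x := max |p₁| |p₂| with hx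
  have hx0 : 0 ≤ x := le_trans (abs_nonneg _) (le_max_left _ _)
  have e₁ : |p₁| ≤ x := le_max_left _ _
  have e₂ : |p₂| ≤ x := le_max_right _ _
  have e₃ : |p₁ - p₂| ≤ 2*x := by
    calc |p₁ - p₂| ≤ |p₁| + |p₂| := abs_sub _ _
      _ ≤ 2*x := by linarith
  have hxh : x ≤ 1/2 := max_le h₁ h₂
  have c1 := cosB (le_trans h₁ (by norm_num))
  have c2 := cosB (le_trans h₂ (by norm_num))
  have c3 := cosB (x := p₁ - p₂) (le_trans e₃ (by linarith))
  have s1 := sinB (le_trans h₁ (by norm_num))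
  have s2 := sinB (le_trans h₂ (by norm_num))
  have s3 := sinB (x := p₁ - p₂) (le_trans e₃ (by linarith))
  have hs3 : Real.sqrt 3 < 1.74 := sqrt3_lt
  have hs3' : 0 ≤ Real.sqrt 3 := Real.sqrt_nonneg _
  have key : hexSymbol (2*π/3 + p₁) (-(2*π/3) + p₂) - (p₁^2 - p₁*p₂ + p₂^2)
      = -(Real.cos p₁ - (1 - p₁^2/2)) - (Real.cos p₂ - (1 - p₂^2/2))
        - (Real.cos (p₁-p₂) - (1 - (p₁-p₂)^2/2))
        - Real.sqrt 3 * (Real.sin p₁ - p₁) + Real.sqrt 3 * (Real.sin p₂ - p₂)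
        + Real.sqrt 3 * (Real.sin (p₁-p₂) - (p₁-p₂)) := by
    rw [hex_expand]; ring
  have q4 : ∀ y z : ℝ, |y| ≤ z → |y|^4 ≤ z^4 := fun y z h => pow_le_pow_left₀ (abs_nonneg _) h 4
  have q3 : ∀ y z : ℝ, |y| ≤ z → |y|^3 ≤ z^3 := fun y z h => pow_le_pow_left₀ (abs_nonneg _) h 3
  have t1 : |Real.cos p₁ - (1 - p₁^2/2)| ≤ (5/96)*x^4 := by
    refine c1.trans ?_; have := q4 _ _ e₁; linarith
  have t2 : |Real.cos p₂ - (1 - p₂^2/2)| ≤ (5/96)*x^4 := by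
    refine c2.trans ?_; have := q4 _ _ e₂; linarith
  have t3 : |Real.cos (p₁-p₂) - (1 - (p₁-p₂)^2/2)| ≤ (5/96)*(16*x^4) := by
    refine c3.trans ?_; have := q4 _ _ e₃; nlinarith
  have m0 : ∀ y b : ℝ, |Real.sin y - y| ≤ (7/32)*b → |Real.sqrt 3 * (Real.sin y - y)| ≤ 1.74*((7/32)*b) := by
    intro y b h
    rw [abs_mul, abs_of_nonneg hs3']
    exact mul_le_mul hs3.le h (abs_nonneg _) (by norm_num)
  have m1 : |Real.sqrt 3 * (Real.sin p₁ - p₁)| ≤ 1.74*((7/32)*x^3) := by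
    refine (m0 _ (x^3) ?_); refine s1.trans ?_; have := q3 _ _ e₁; linarith
  have m2 : |Real.sqrt 3 * (Real.sin p₂ - p₂)| ≤ 1.74*((7/32)*x^3) := by
    refine (m0 _ (x^3) ?_); refine s2.trans ?_; have := q3 _ _ e₂; linarith
  have m3 : |Real.sqrt 3 * (Real.sin (p₁-p₂) - (p₁-p₂))| ≤ 1.74*((7/32)*(8*x^3)) := by
    refine (m0 _ (8*x^3) ?_); refine s3.trans ?_; have := q3 _ _ e₃; nlinarith
  have x43 : x^4 ≤ x^3/2 := by
    have h3 : 0 ≤ x^3 := pow_nonneg hx0 3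
    calc x^4 = x^3*x := by ring
      _ ≤ x^3*(1/2) := by gcongr
      _ = x^3/2 := by ring
  rw [key]
  set C1 := Real.cos p₁ - (1 - p₁^2/2)
  set C2 := Real.cos p₂ - (1 - p₂^2/2)
  set C3 := Real.cos (p₁-p₂) - (1 - (p₁-p₂)^2/2)
  set S1 := Real.sqrt 3 * (Real.sin p₁ - p₁)
  set S2 := Real.sqrt 3 * (Real.sin p₂ - p₂)
  set S3 := Real.sqrt 3 * (Real.sin (p₁-p₂) - (p₁-p₂))
  have sum6 : |-C1 - C2 - C3 - S1 + S2 + S3| ≤ |C1| + |C2| + |C3| + |S1| + |S2| + |S3| := by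
    calc |-C1 - C2 - C3 - S1 + S2 + S3| ≤ |-C1 - C2 - C3 - S1 + S2| + |S3| := abs_add_le _ _
      _ ≤ (|-C1 - C2 - C3 - S1| + |S2|) + |S3| := by gcongr; try exact abs_add_le _ _
      _ ≤ ((|-C1 - C2 - C3| + |S1|) + |S2|) + |S3| := by gcongr; try exact abs_sub _ _
      _ ≤ (((|-C1 - C2| + |C3|) + |S1|) + |S2|) + |S3| := by gcongr; try exact abs_sub _ _
      _ ≤ ((((|-C1| + |C2|) + |C3|) + |S1|) + |S2|) + |S3| := by gcongr; try exact abs_sub _ _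
      _ = |C1| + |C2| + |C3| + |S1| + |S2| + |S3| := by rw [abs_neg]; try ring
  refine sum6.trans ?_
  have hx3 : 0 ≤ x^3 := pow_nonneg hx0 3
  linarith


lemma cos_half_pos {x : ℝ} (hx : x ∈ Set.Icc 0 (2*π)) (hc : Real.cos x = -(1/2))
    (hs : 0 < Real.sin x) : x = 2*π/3 := by
  have hpi := Real.pi_pos
  have hxpi : x ≤ π := by
    by_contra h
    push_neg at h
    have : Real.sin x ≤ 0 := by
      have : Real.sin (x - π) ≥ 0 :=
        Real.sin_nonneg_of_nonneg_of_le_pi (by linarith [hx.1]) (by linarith [hx.2])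
      have e : Real.sin (x - π) = -Real.sin x := by
        rw [Real.sin_sub, Real.sin_pi, Real.cos_pi]; ring
      linarith [e ▸ this]
    linarith
  have h23 : Real.cos (2*π/3) = -(1/2) := by
    rw [show 2*π/3 = π - π/3 by ring, Real.cos_pi_sub, Real.cos_pi_div_three]
  exact Real.injOn_cos ⟨hx.1, hxpi⟩ ⟨by linarith, by linarith⟩ (by rw [hc, h23])

lemma hex_zero {a b : ℝ} (ha : a ∈ Set.Icc 0 (2*π)) (hb : b ∈ Set.Icc 0 (2*π))
    (h : hexSymbol a b = 0) : (a = 2*π/3 ∧ b = 4*π/3) ∨ (a = 4*π/3 ∧ b = 2*π/3) := by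
  have hpi := Real.pi_pos
  rw [hex_sq] at h
  have h1 : 1 + Real.cos a + Real.cos b = 0 := by nlinarith [sq_nonneg (1+Real.cos a+Real.cos b), sq_nonneg (Real.sin a+Real.sin b)]
  have h2 : Real.sin a + Real.sin b = 0 := by nlinarith [sq_nonneg (1+Real.cos a+Real.cos b), sq_nonneg (Real.sin a+Real.sin b)]
  have pa := Real.sin_sq_add_cos_sq a
  have pb := Real.sin_sq_add_cos_sq b
  have hca : Real.cos a = -(1/2) := by nlinarith
  have hcb : Real.cos b = -(1/2) := by linarith
  have hsa : Real.sin a ^ 2 = 3/4 := by nlinarith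
  have hsane : Real.sin a ≠ 0 := by intro h0; rw [h0] at hsa; norm_num at hsa
  rcases hsane.lt_or_gt with hneg | hpos
  · right
    have hsb : 0 < Real.sin b := by linarith
    have hbv : b = 2*π/3 := cos_half_pos hb hcb hsb
    have hav : a = 4*π/3 := by
      have h2a : 2*π - a ∈ Set.Icc 0 (2*π) := ⟨by linarith [ha.2], by linarith [ha.1]⟩
      have hc2 : Real.cos (2*π - a) = -(1/2) := by
        rw [Real.cos_sub, Real.cos_two_pi, Real.sin_two_pi]; simpa using hca
      have hs2 : 0 < Real.sin (2*π - a) := by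
        rw [Real.sin_sub, Real.cos_two_pi, Real.sin_two_pi]; simpa using hneg
      have := cos_half_pos h2a hc2 hs2
      linarith
    exact ⟨hav, hbv⟩
  · left
    have hav : a = 2*π/3 := cos_half_pos ha hca hpos
    have hsb : Real.sin b < 0 := by linarith
    have hbv : b = 4*π/3 := by
      have h2b : 2*π - b ∈ Set.Icc 0 (2*π) := ⟨by linarith [hb.2], by linarith [hb.1]⟩
      have hc2 : Real.cos (2*π - b) = -(1/2) := by
        rw [Real.cos_sub, Real.cos_two_pi, Real.sin_two_pi]; simpa using hcb
      have hs2 : 0 < Real.sin (2*π - b) := by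
        rw [Real.sin_sub, Real.cos_two_pi, Real.sin_two_pi]; simpa using hsb
      have := cos_half_pos h2b hc2 hs2
      linarith
    exact ⟨hav, hbv⟩

lemma exists_far_bound : ∃ c > (0:ℝ), ∀ a b : ℝ,
    (∀ m₁ m₂ : ℤ, (1/30 ≤ max |a - (2*π/3 + 2*π*m₁)| |b - (-(2*π/3) + 2*π*m₂)|) ∧
                  (1/30 ≤ max |a - (-(2*π/3) + 2*π*m₁)| |b - (2*π/3 + 2*π*m₂)|)) →
    c ≤ hexSymbol a b := by
  have hpi := Real.pi_pos
  have hpi3 := Real.pi_gt_three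
  set F : ℝ × ℝ → ℝ := fun p => hexSymbol p.1 p.2 with hF
  have hFc : Continuous F := by
    unfold F; unfold hexSymbol; fun_prop
  set P₁ : ℝ × ℝ := (2*π/3, 4*π/3) with hP₁
  set P₂ : ℝ × ℝ := (4*π/3, 2*π/3) with hP₂
  set T : Set (ℝ × ℝ) := (Set.Icc 0 (2*π) ×ˢ Set.Icc 0 (2*π)) ∩
    {p | 1/30 ≤ dist p P₁ ∧ 1/30 ≤ dist p P₂} with hT
  have hTc : IsCompact T := by
    apply (isCompact_Icc.prod isCompact_Icc).inter_right
    apply IsClosed.inter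
    · exact isClosed_le continuous_const (Continuous.dist continuous_id continuous_const)
    · exact isClosed_le continuous_const (Continuous.dist continuous_id continuous_const)
  have hzero_mem : ((0:ℝ), (0:ℝ)) ∈ T := by
    refine ⟨⟨⟨le_refl 0, by show (0:ℝ) ≤ 2*π; linarith⟩,
             ⟨le_refl 0, by show (0:ℝ) ≤ 2*π; linarith⟩⟩, ?_, ?_⟩
    · show 1/30 ≤ dist ((0:ℝ),(0:ℝ)) P₁
      rw [Prod.dist_eq]
      refine le_trans ?_ (le_max_left _ _)
      show 1/30 ≤ dist (0:ℝ) (2*π/3)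
      rw [Real.dist_eq, abs_of_nonpos (by linarith)]
      linarith
    · show 1/30 ≤ dist ((0:ℝ),(0:ℝ)) P₂
      rw [Prod.dist_eq]
      refine le_trans ?_ (le_max_left _ _)
      show 1/30 ≤ dist (0:ℝ) (4*π/3)
      rw [Real.dist_eq, abs_of_nonpos (by linarith)]
      linarith
  obtain ⟨k₀, hk₀T, hmin⟩ := hTc.exists_isMinOn ⟨_, hzero_mem⟩ hFc.continuousOn
  refine ⟨F k₀, ?_, ?_⟩
  · rcases (hex_nonneg k₀.1 k₀.2).lt_or_eq with h | h
    · exact h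
    · exfalso
      have hz := hex_zero hk₀T.1.1 hk₀T.1.2 h.symm
      rcases hz with ⟨h1, h2⟩ | ⟨h1, h2⟩
      · have hk : k₀ = P₁ := Prod.ext h1 h2
        have h30 := hk₀T.2.1
        rw [hk, dist_self] at h30
        norm_num at h30
      · have hk : k₀ = P₂ := Prod.ext h1 h2
        have h30 := hk₀T.2.2
        rw [hk, dist_self] at h30
        norm_num at h30
  · intro a b hfar
    set ma := ⌊a/(2*π)⌋ with hma
    set mb := ⌊b/(2*π)⌋ with hmb
    set a' := a - 2*π*ma with ha'
    set b' := b - 2*π*mb with hb'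
    have h2pi : (0:ℝ) < 2*π := by linarith
    have haI : a' ∈ Set.Icc 0 (2*π) := by
      constructor
      · have := Int.sub_floor_div_mul_nonneg a h2pi
        rw [ha']; linarith [this]
      · have := Int.sub_floor_div_mul_lt a h2pi
        rw [ha']; linarith [this]
    have hbI : b' ∈ Set.Icc 0 (2*π) := by
      constructor
      · have := Int.sub_floor_div_mul_nonneg b h2pi
        rw [hb']; linarith [this]
      · have := Int.sub_floor_div_mul_lt b h2pi
        rw [hb']; linarith [this]
    have hmem : (a', b') ∈ T := by
      refine ⟨⟨haI, hbI⟩, ?_, ?_⟩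
      · rw [Prod.dist_eq, Real.dist_eq, Real.dist_eq]
        have := (hfar ma (mb+1)).1
        have e1 : a' - P₁.1 = a - (2*π/3 + 2*π*ma) := by rw [hP₁, ha']; ring
        have e2 : b' - P₁.2 = b - (-(2*π/3) + 2*π*((mb+1 : ℤ) : ℝ)) := by
          rw [hP₁, hb']; push_cast; ring
        rw [e1, e2]
        exact this
      · rw [Prod.dist_eq, Real.dist_eq, Real.dist_eq]
        have := (hfar (ma+1) mb).2
        have e1 : a' - P₂.1 = a - (-(2*π/3) + 2*π*((ma+1 : ℤ) : ℝ)) := by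
          rw [hP₂, ha']; push_cast; ring
        have e2 : b' - P₂.2 = b - (2*π/3 + 2*π*mb) := by rw [hP₂, hb']; ring
        rw [e1, e2]
        exact this
    have hval : F (a', b') = hexSymbol a b := by
      show hexSymbol a' b' = hexSymbol a b
      have := hex_period a' b' ma mb
      rw [ha', hb'] at this ⊢
      convert this.symm using 2 <;> ring
    calc F k₀ ≤ F (a', b') := hmin hmem
      _ = hexSymbol a b := hval


lemma sqle {a b : ℝ} (ha : 0 ≤ a) (hb : 0 ≤ b) (h : a^2 ≤ b^2) : a ≤ b := by nlinarith

lemma core_lower (Q b x Nr : ℝ) (hb : 0 ≤ b) (hN : 317 ≤ Nr)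
    (hbN : b * Nr ≤ 2.57) (hQb : b^2 ≤ Q) (hx : 0 ≤ x) (hx30 : x ≤ 1/30)
    (hx2 : x^2 ≤ 2*Q) : b^2 - 290/Nr^3 ≤ Q - 5*x^3 := by
  have hN0 : (0:ℝ) < Nr := by linarith
  have hN3 : (0:ℝ) < Nr^3 := by positivity
  have hQ0 : 0 ≤ Q := le_trans (sq_nonneg b) hQb
  set a := Real.sqrt Q with hadef
  have ha0 : 0 ≤ a := Real.sqrt_nonneg _
  have ha2 : a^2 = Q := Real.sq_sqrt hQ0
  have hba : b ≤ a := sqle hb ha0 (by rw [ha2]; exact hQb)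
  have hxa : x ≤ 1.5*a := sqle hx (by linarith) (by nlinarith)
  have hb3 : b^3 * Nr^3 ≤ 17 := by nlinarith [mul_nonneg hb hN0.le, sq_nonneg (b*Nr)]
  have hb3' : b^3 ≤ 17/Nr^3 := by rw [le_div_iff₀ hN3]; linarith
  have h5x : 5*x^3 ≤ 17*a^3 := by nlinarith [pow_le_pow_left₀ hx hxa 3]
  by_cases hA : a ≤ 1/51
  · have inner : 0 ≤ a + b - 17*(a^2 + a*b + b^2) := by nlinarith
    have mono : b^2 - 17*b^3 ≤ a^2 - 17*a^3 := by
      nlinarith [mul_nonneg (sub_nonneg.2 hba) inner]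
    have h289 : 17*b^3 ≤ 289/Nr^3 := by
      calc 17*b^3 ≤ 17*(17/Nr^3) := by linarith
        _ = 289/Nr^3 := by ring
    have h290 : (289:ℝ)/Nr^3 ≤ 290/Nr^3 := by gcongr <;> norm_num
    calc b^2 - 290/Nr^3 ≤ b^2 - 17*b^3 := by linarith
      _ ≤ a^2 - 17*a^3 := mono
      _ ≤ a^2 - 5*x^3 := by linarith
      _ = Q - 5*x^3 := by rw [ha2]
  · push_neg at hA
    have hbsmall : b ≤ 2.57/Nr := by rw [le_div_iff₀ hN0]; linarith
    have hb2 : b^2 ≤ (2.57/317)^2 := by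
      have : b ≤ 2.57/317 := le_trans hbsmall (by
        apply div_le_div_of_nonneg_left (by norm_num) (by norm_num) hN)
      nlinarith
    have hx3 : x^3 ≤ (1/30)^3 := pow_le_pow_left₀ hx hx30 3
    have : (1/51:ℝ)^2 < a^2 := by nlinarith
    have hdiv : 0 < 290/Nr^3 := by positivity
    nlinarith

lemma far_max {k₁ k₂ u v : ℝ} (h : |k₁ - u| < 1/30 → 1/30 ≤ |k₂ - v|) :
    1/30 ≤ max |k₁ - u| |k₂ - v| := by
  rcases le_or_gt (1/30) |k₁ - u| with h1 | h1
  · exact le_trans h1 (le_max_left _ _)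
  · exact le_trans (h h1) (le_max_right _ _)

lemma f_lower (c₀ : ℝ) (hc₀ : 0 < c₀)
    (hfar : ∀ a b : ℝ,
      (∀ m₁ m₂ : ℤ, (1/30 ≤ max |a - (2*π/3 + 2*π*m₁)| |b - (-(2*π/3) + 2*π*m₂)|) ∧
                    (1/30 ≤ max |a - (-(2*π/3) + 2*π*m₁)| |b - (2*π/3 + 2*π*m₂)|)) →
      c₀ ≤ hexSymbol a b)
    (t₁ t₂ : ℤ) (hd : ¬ (3:ℤ) ∣ (t₁ - t₂))
    (hn2 : (100489:ℝ) ≤ (t₁:ℝ)^2 + (t₂:ℝ)^2)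
    (hcn : 2*π^2 ≤ 3*c₀*((t₁:ℝ)^2+(t₂:ℝ)^2))
    (k₁ k₂ : ℝ) (n : ℤ) (hk : (t₁:ℝ)*k₁ + (t₂:ℝ)*k₂ = 2*π*n) :
    π^2/(3*((t₁:ℝ)^2+(t₁:ℝ)*(t₂:ℝ)+(t₂:ℝ)^2)) - 290/(Real.sqrt ((t₁:ℝ)^2+(t₂:ℝ)^2))^3
      ≤ hexSymbol k₁ k₂ := by
  have hpi := Real.pi_pos
  have hpilt : π < 3.1416 := Real.pi_lt_d4
  obtain ⟨n2, hn2def⟩ : ∃ v : ℝ, v = (t₁:ℝ)^2 + (t₂:ℝ)^2 := ⟨_, rfl⟩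
  obtain ⟨S, hSdef⟩ : ∃ v : ℝ, v = (t₁:ℝ)^2+(t₁:ℝ)*(t₂:ℝ)+(t₂:ℝ)^2 := ⟨_, rfl⟩
  rw [← hn2def] at hn2 hcn
  rw [← hSdef, ← hn2def]
  have hSn2 : n2 ≤ 2*S := by
    rw [hSdef, hn2def]; nlinarith only [sq_nonneg ((t₁:ℝ)+(t₂:ℝ))]
  have hSpos : 0 < S := by linarith only [hSn2, hn2]
  obtain ⟨Nr, hNdef⟩ : ∃ v : ℝ, v = Real.sqrt n2 := ⟨_, rfl⟩
  rw [← hNdef]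
  have hNr2 : Nr^2 = n2 := by rw [hNdef]; exact Real.sq_sqrt (by linarith only [hn2])
  have hNrpos : (317:ℝ) ≤ Nr := by
    have h1 : (317:ℝ) = Real.sqrt (317^2) := by rw [Real.sqrt_sq]; norm_num
    rw [h1, hNdef]
    apply Real.sqrt_le_sqrt
    norm_num
    linarith only [hn2]
  have hN0 : (0:ℝ) < Nr := by linarith only [hNrpos]
  have hN3 : (0:ℝ) < Nr^3 := by positivity
  have hQ₀S : π^2/(3*S) ≤ 2*π^2/(3*n2) := by
    rw [div_le_div_iff₀ (by linarith only [hSpos]) (by linarith only [hn2])]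
    nlinarith only [hSn2, sq_nonneg π]
  by_cases hnear : ∃ (σ m₁ m₂ : ℤ), (σ = 1 ∨ σ = -1) ∧
      |k₁ - ((σ:ℝ)*(2*π/3) + 2*π*m₁)| < 1/30 ∧ |k₂ - (-(σ:ℝ)*(2*π/3) + 2*π*m₂)| < 1/30
  · obtain ⟨σ, m₁, m₂, hσ, hk1, hk2⟩ := hnear
    have main : ∃ p₁ p₂ : ℝ, |p₁| < 1/30 ∧ |p₂| < 1/30 ∧
        hexSymbol k₁ k₂ = hexSymbol (2*π/3 + p₁) (-(2*π/3) + p₂) ∧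
        ∃ j : ℤ, (t₁:ℝ)*p₁ + (t₂:ℝ)*p₂ = 2*π*j - 2*π*((t₁:ℝ)-(t₂:ℝ))/3 := by
      rcases hσ with hσ | hσ
      · subst hσ
        refine ⟨k₁ - (2*π/3 + 2*π*m₁), k₂ - (-(2*π/3) + 2*π*m₂), ?_, ?_, ?_, ?_⟩
        · convert hk1 using 2; push_cast; ring
        · convert hk2 using 2; push_cast; ring
        · rw [← hex_period (2*π/3 + (k₁ - (2*π/3 + 2*π*m₁)))
            (-(2*π/3) + (k₂ - (-(2*π/3) + 2*π*m₂))) m₁ m₂]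
          congr 1 <;> ring
        · refine ⟨n - t₁*m₁ - t₂*m₂, ?_⟩
          push_cast
          linear_combination hk
      · subst hσ
        refine ⟨-(k₁ - (-(2*π/3) + 2*π*m₁)), -(k₂ - (2*π/3 + 2*π*m₂)), ?_, ?_, ?_, ?_⟩
        · rw [abs_neg]; convert hk1 using 2; push_cast; ring
        · rw [abs_neg]; convert hk2 using 2; push_cast; ring
        · rw [← hex_even (2*π/3 + -(k₁ - (-(2*π/3) + 2*π*m₁)))
              (-(2*π/3) + -(k₂ - (2*π/3 + 2*π*m₂)))]
          rw [← hex_period (-(2*π/3 + -(k₁ - (-(2*π/3) + 2*π*m₁))))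
              (-(-(2*π/3) + -(k₂ - (2*π/3 + 2*π*m₂)))) m₁ m₂]
          congr 1 <;> ring
        · refine ⟨t₁*m₁ + t₂*m₂ - n, ?_⟩
          push_cast
          linear_combination -hk
    obtain ⟨p₁, p₂, hp1, hp2, hkk, j, hj⟩ := main
    obtain ⟨x, hxdef⟩ : ∃ v : ℝ, v = max |p₁| |p₂| := ⟨_, rfl⟩
    have hx0 : 0 ≤ x := hxdef ▸ le_trans (abs_nonneg _) (le_max_left _ _)
    have hx30 : x ≤ 1/30 := hxdef ▸ max_le hp1.le hp2.le
    have htay := hex_taylor p₁ p₂ (by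
        have := hp1.le; linarith only [this]) (by
        have := hp2.le; linarith only [this])
    have hfQ : (p₁^2 - p₁*p₂ + p₂^2) - 5*x^3 ≤ hexSymbol k₁ k₂ := by
      rw [hkk]
      have h1 := (abs_le.1 htay).1
      rw [← hxdef] at h1
      linarith only [h1]
    have hz : 3*j - (t₁ - t₂) ≠ 0 := by
      intro h0
      exact hd ⟨j, by linarith only [h0]⟩
    have habs : (1:ℤ) ≤ (3*j - (t₁ - t₂))^2 := by
      have h1 : 1 ≤ |3*j - (t₁-t₂)| := Int.one_le_abs hz
      nlinarith only [h1, sq_abs (3*j - (t₁-t₂))]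
    have habsR : (1:ℝ) ≤ ((3*j - (t₁ - t₂) : ℤ):ℝ)^2 := by exact_mod_cast habs
    have htp : (2*π/3)^2 ≤ ((t₁:ℝ)*p₁ + (t₂:ℝ)*p₂)^2 := by
      have he : (t₁:ℝ)*p₁ + (t₂:ℝ)*p₂ = (2*π/3) * ((3*j - (t₁ - t₂) : ℤ):ℝ) := by
        push_cast
        linear_combination hj
      rw [he]
      calc (2*π/3)^2 = (2*π/3)^2 * 1 := by ring
        _ ≤ (2*π/3)^2 * ((3*j - (t₁ - t₂) : ℤ):ℝ)^2 := by
            apply mul_le_mul_of_nonneg_left habsR (by positivity)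
        _ = ((2*π/3) * ((3*j - (t₁ - t₂) : ℤ):ℝ))^2 := by ring
    have hcs := cs_ineq (t₁:ℝ) (t₂:ℝ) p₁ p₂
    rw [← hSdef] at hcs
    have hQ0 : π^2/(3*S) ≤ p₁^2 - p₁*p₂ + p₂^2 := by
      rw [div_le_iff₀ (by linarith only [hSpos])]
      nlinarith only [htp, hcs, hSpos]
    obtain ⟨b, hbdef⟩ : ∃ v : ℝ, v = Real.sqrt (π^2/(3*S)) := ⟨_, rfl⟩
    have hb0 : 0 ≤ b := hbdef ▸ Real.sqrt_nonneg _
    have hb2 : b^2 = π^2/(3*S) := by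
      rw [hbdef]; exact Real.sq_sqrt (by positivity)
    have hbN : b * Nr ≤ 2.57 := by
      apply sqle (by positivity) (by norm_num)
      have h2 : (b*Nr)^2 = (π^2/(3*S)) * n2 := by rw [mul_pow, hb2, hNr2]
      rw [h2]
      have h1 : (π^2/(3*S)) * n2 ≤ 2*π^2/3 := by
        rw [div_mul_eq_mul_div, div_le_div_iff₀ (by linarith only [hSpos]) (by norm_num)]
        nlinarith only [hSn2, sq_nonneg π]
      nlinarith only [h1, hpilt, hpi]
    have hx2Q : x^2 ≤ 2*(p₁^2 - p₁*p₂ + p₂^2) := by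
      have h1 : x^2 ≤ p₁^2 + p₂^2 := by
        rcases max_cases |p₁| |p₂| with ⟨h,_⟩ | ⟨h,_⟩ <;> rw [hxdef, h, sq_abs]
        · linarith only [sq_nonneg p₂]
        · linarith only [sq_nonneg p₁]
      linarith only [h1, sq_nonneg (p₁ - p₂)]
    have hcore := core_lower (p₁^2 - p₁*p₂ + p₂^2) b x Nr hb0 hNrpos hbN
      (by rw [hb2]; exact hQ0) hx0 hx30 hx2Q
    rw [hb2] at hcore
    linarith only [hcore, hfQ]
  · push_neg at hnear
    have hprem : ∀ m₁ m₂ : ℤ,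
        (1/30 ≤ max |k₁ - (2*π/3 + 2*π*m₁)| |k₂ - (-(2*π/3) + 2*π*m₂)|) ∧
        (1/30 ≤ max |k₁ - (-(2*π/3) + 2*π*m₁)| |k₂ - (2*π/3 + 2*π*m₂)|) := by
      intro m₁ m₂
      constructor
      · have h := hnear 1 m₁ m₂ (Or.inl rfl)
        have e1 : ((1:ℤ):ℝ)*(2*π/3) + 2*π*((m₁:ℤ):ℝ) = 2*π/3 + 2*π*m₁ := by push_cast; ring
        have e2 : -((1:ℤ):ℝ)*(2*π/3) + 2*π*((m₂:ℤ):ℝ) = -(2*π/3) + 2*π*m₂ := by push_cast; ring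
        rw [e1, e2] at h
        exact far_max h
      · have h := hnear (-1) m₁ m₂ (Or.inr rfl)
        have e1 : ((-1:ℤ):ℝ)*(2*π/3) + 2*π*((m₁:ℤ):ℝ) = -(2*π/3) + 2*π*m₁ := by push_cast; ring
        have e2 : -((-1:ℤ):ℝ)*(2*π/3) + 2*π*((m₂:ℤ):ℝ) = 2*π/3 + 2*π*m₂ := by push_cast; ring
        rw [e1, e2] at h
        exact far_max h
    have hfarv := hfar k₁ k₂ hprem
    have hc : π^2/(3*S) ≤ c₀ := by
      refine hQ₀S.trans ?_
      rw [div_le_iff₀ (by linarith only [hn2])]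
      linarith only [hcn]
    have hpos : (0:ℝ) < 290/Nr^3 := by positivity
    linarith only [hfarv, hc, hpos]

lemma f_upper (t₁ t₂ : ℤ) (hd : ¬ (3:ℤ) ∣ (t₁ - t₂))
    (hn2 : (100489:ℝ) ≤ (t₁:ℝ)^2 + (t₂:ℝ)^2) :
    ∃ (k₁ k₂ : ℝ) (n : ℤ), (t₁:ℝ)*k₁ + (t₂:ℝ)*k₂ = 2*π*n ∧
      hexSymbol k₁ k₂ ≤ π^2/(3*((t₁:ℝ)^2+(t₁:ℝ)*(t₂:ℝ)+(t₂:ℝ)^2))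
        + 1300/(Real.sqrt ((t₁:ℝ)^2+(t₂:ℝ)^2))^3 := by
  have hpi := Real.pi_pos
  have hpilt : π < 3.1416 := Real.pi_lt_d4
  obtain ⟨n2, hn2def⟩ : ∃ v : ℝ, v = (t₁:ℝ)^2 + (t₂:ℝ)^2 := ⟨_, rfl⟩
  obtain ⟨S, hSdef⟩ : ∃ v : ℝ, v = (t₁:ℝ)^2+(t₁:ℝ)*(t₂:ℝ)+(t₂:ℝ)^2 := ⟨_, rfl⟩
  rw [← hn2def] at hn2
  rw [← hSdef, ← hn2def]
  have hSn2 : n2 ≤ 2*S := by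
    rw [hSdef, hn2def]; nlinarith only [sq_nonneg ((t₁:ℝ)+(t₂:ℝ))]
  have hSpos : 0 < S := by linarith only [hSn2, hn2]
  obtain ⟨Nr, hNdef⟩ : ∃ v : ℝ, v = Real.sqrt n2 := ⟨_, rfl⟩
  rw [← hNdef]
  have hNr2 : Nr^2 = n2 := by rw [hNdef]; exact Real.sq_sqrt (by linarith only [hn2])
  have hNrpos : (317:ℝ) ≤ Nr := by
    have h1 : (317:ℝ) = Real.sqrt (317^2) := by rw [Real.sqrt_sq]; norm_num
    rw [h1, hNdef]
    apply Real.sqrt_le_sqrt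
    norm_num
    linarith only [hn2]
  have hN0 : (0:ℝ) < Nr := by linarith only [hNrpos]
  have hN3 : (0:ℝ) < Nr^3 := by positivity
  -- the sign σ
  set σ : ℤ := if (t₁ - t₂) % 3 = 1 then 1 else -1 with hσdef
  have hσ1 : σ = 1 ∨ σ = -1 := by
    rw [hσdef]; split_ifs <;> simp
  have hσ2 : ((σ:ℤ):ℝ)^2 = 1 := by rcases hσ1 with h | h <;> rw [h] <;> norm_num
  have hdvd : (3:ℤ) ∣ (t₁ - t₂ - σ) := by
    rw [hσdef]
    have h3 : ¬ (3:ℤ) ∣ (t₁ - t₂) := hd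
    split_ifs with h <;> omega
  obtain ⟨n, hn⟩ := hdvd
  have hncast : (t₁:ℝ) - (t₂:ℝ) - ((σ:ℤ):ℝ) = 3*(n:ℝ) := by exact_mod_cast congrArg (Int.cast : ℤ → ℝ) hn
  -- the test point
  obtain ⟨p₁, hp1def⟩ : ∃ v : ℝ, v = -((σ:ℤ):ℝ)*π/(3*S)*(2*(t₁:ℝ)+(t₂:ℝ)) := ⟨_, rfl⟩
  obtain ⟨p₂, hp2def⟩ : ∃ v : ℝ, v = -((σ:ℤ):ℝ)*π/(3*S)*((t₁:ℝ)+2*(t₂:ℝ)) := ⟨_, rfl⟩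
  refine ⟨2*π/3 + p₁, -(2*π/3) + p₂, n, ?_, ?_⟩
  · -- membership
    have htp : (t₁:ℝ)*p₁ + (t₂:ℝ)*p₂ = -((σ:ℤ):ℝ)*2*π/3 := by
      calc (t₁:ℝ)*p₁ + (t₂:ℝ)*p₂
          = -((σ:ℤ):ℝ)*π/(3*S)*(2*((t₁:ℝ)^2+(t₁:ℝ)*(t₂:ℝ)+(t₂:ℝ)^2)) := by
            rw [hp1def, hp2def]; ring
        _ = -((σ:ℤ):ℝ)*π/(3*S)*(2*S) := by rw [← hSdef]
        _ = -((σ:ℤ):ℝ)*2*π/3 := by field_simp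
    have e : (t₁:ℝ)*(2*π/3 + p₁) + (t₂:ℝ)*(-(2*π/3) + p₂)
        = 2*π/3*((t₁:ℝ)-(t₂:ℝ)) + ((t₁:ℝ)*p₁ + (t₂:ℝ)*p₂) := by ring
    rw [e, htp]
    linear_combination (2*π/3) * hncast
  · -- value bound
    have hS0 : S ≠ 0 := ne_of_gt hSpos
    have hQval : p₁^2 - p₁*p₂ + p₂^2 = π^2/(3*S) := by
      calc p₁^2 - p₁*p₂ + p₂^2
          = ((σ:ℤ):ℝ)^2 * ((π/(3*S))^2*(3*((t₁:ℝ)^2+(t₁:ℝ)*(t₂:ℝ)+(t₂:ℝ)^2))) := by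
            rw [hp1def, hp2def]; ring
        _ = (π/(3*S))^2*(3*S) := by rw [hσ2, ← hSdef]; ring
        _ = π^2/(3*S) := by field_simp; try ring
    -- size of p₁, p₂
    have haux1 : (2*(t₁:ℝ)+(t₂:ℝ))^2 ≤ 9*Nr^2 := by
      rw [hNr2, hn2def]
      nlinarith only [sq_nonneg (2*(t₁:ℝ)-(t₂:ℝ)), sq_nonneg (t₁:ℝ), sq_nonneg (t₂:ℝ)]
    have haux2 : ((t₁:ℝ)+2*(t₂:ℝ))^2 ≤ 9*Nr^2 := by
      rw [hNr2, hn2def]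
      nlinarith only [sq_nonneg ((t₁:ℝ)-2*(t₂:ℝ)), sq_nonneg (t₁:ℝ), sq_nonneg (t₂:ℝ)]
    have hq4 : Nr^2*Nr^2 ≤ 4*S^2 := by
      rw [hNr2]
      nlinarith only [hSn2, hn2]
    have hbound : ∀ p c : ℝ, p^2*(9*S^2) = π^2 * c → c ≤ 9*Nr^2 → |p| ≤ 2*π/Nr := by
      intro p c he hc
      apply sqle (abs_nonneg _) (by positivity)
      rw [sq_abs]
      have key : (p^2)*(9*S^2) ≤ (2*π/Nr)^2*(9*S^2) := by
        have h1 : π^2 * c ≤ π^2 * (9*Nr^2) :=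
          mul_le_mul_of_nonneg_left hc (by positivity)
        have h2 : (2*π/Nr)^2*(9*S^2) = 36*π^2*S^2/(Nr^2) := by
          field_simp; ring
        rw [he, h2]
        rw [le_div_iff₀ (by positivity)]
        calc π^2*c*Nr^2 ≤ π^2*(9*Nr^2)*Nr^2 := by
              apply mul_le_mul_of_nonneg_right h1 (by positivity)
          _ = 9*π^2*(Nr^2*Nr^2) := by ring
          _ ≤ 9*π^2*(4*S^2) := by
              apply mul_le_mul_of_nonneg_left hq4 (by positivity)
          _ = 36*π^2*S^2 := by ring
      exact le_of_mul_le_mul_right key (by positivity)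
    have he1 : p₁^2*(9*S^2) = π^2 * ((2*(t₁:ℝ)+(t₂:ℝ))^2) := by
      calc p₁^2*(9*S^2)
          = ((σ:ℤ):ℝ)^2 * ((π/(3*S))^2*(9*S^2)*((2*(t₁:ℝ)+(t₂:ℝ))^2)) := by
            rw [hp1def]; ring
        _ = (π/(3*S))^2*(9*S^2)*((2*(t₁:ℝ)+(t₂:ℝ))^2) := by rw [hσ2]; ring
        _ = π^2 * ((2*(t₁:ℝ)+(t₂:ℝ))^2) := by field_simp; try ring
    have he2 : p₂^2*(9*S^2) = π^2 * (((t₁:ℝ)+2*(t₂:ℝ))^2) := by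
      calc p₂^2*(9*S^2)
          = ((σ:ℤ):ℝ)^2 * ((π/(3*S))^2*(9*S^2)*(((t₁:ℝ)+2*(t₂:ℝ))^2)) := by
            rw [hp2def]; ring
        _ = (π/(3*S))^2*(9*S^2)*(((t₁:ℝ)+2*(t₂:ℝ))^2) := by rw [hσ2]; ring
        _ = π^2 * (((t₁:ℝ)+2*(t₂:ℝ))^2) := by field_simp; try ring
    have hp1b : |p₁| ≤ 2*π/Nr := hbound p₁ _ he1 haux1
    have hp2b : |p₂| ≤ 2*π/Nr := hbound p₂ _ he2 haux2
    have hsmall : 2*π/Nr ≤ 1/50 := by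
      rw [div_le_iff₀ hN0]
      nlinarith only [hpilt, hNrpos]
    have htay := hex_taylor p₁ p₂ (by linarith only [hp1b, hsmall])
      (by linarith only [hp2b, hsmall])
    have hub := (abs_le.1 htay).2
    have hxb : max |p₁| |p₂| ≤ 2*π/Nr := max_le hp1b hp2b
    have hx0 : 0 ≤ max |p₁| |p₂| := le_trans (abs_nonneg _) (le_max_left _ _)
    have hx3 : (max |p₁| |p₂|)^3 ≤ (2*π/Nr)^3 := pow_le_pow_left₀ hx0 hxb 3
    have hfin : 5*(2*π/Nr)^3 ≤ 1300/Nr^3 := by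
      have e : 5*(2*π/Nr)^3 = 40*π^3/Nr^3 := by field_simp; ring
      rw [e]
      rw [div_le_div_iff₀ (by positivity) hN3]
      have hπ2 : π^2 ≤ 9.87 := by nlinarith only [hpilt, hpi]
      have hπ3 : π^3 ≤ 32.5 := by nlinarith only [hπ2, hpilt, hpi]
      nlinarith only [hπ3, hN3]
    calc hexSymbol (2*π/3 + p₁) (-(2*π/3) + p₂)
        ≤ (p₁^2 - p₁*p₂ + p₂^2) + 5*(max |p₁| |p₂|)^3 := by linarith only [hub]
      _ ≤ π^2/(3*S) + 1300/Nr^3 := by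
          rw [hQval]
          have : 5*(max |p₁| |p₂|)^3 ≤ 5*(2*π/Nr)^3 := by linarith only [hx3]
          linarith only [this, hfin]


/-- `ε(t₁,t₂)`: the opening of the nanotube spectral gap beyond `[3−q, 3+q]`. -/
noncomputable def gapEps (q : ℝ) (t₁ t₂ : ℤ) : ℝ :=
  sInf ((fun k : ℝ × ℝ => Real.sqrt (hexSymbol k.1 k.2 + q^2)) ''
    {k : ℝ × ℝ | ∃ n : ℤ, (t₁ : ℝ) * k.1 + (t₂ : ℝ) * k.2 = 2*π*n}) - q

/-- for coprime `(t₁,t₂)` with `3 ∤ t₁ − t₂`,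
`ε(t₁,t₂) = π²/(6q(t₁²+t₁t₂+t₂²)) + O((t₁²+t₂²)^{−3/2})` uniformly. -/
theorem stmt_13 (q : ℝ) (hq : 0 < q) :
    ∃ C > (0:ℝ), ∀ t₁ t₂ : ℤ, IsCoprime t₁ t₂ → ¬ ((3:ℤ) ∣ t₁ - t₂) →
      |gapEps q t₁ t₂ - π^2 / (6*q*((t₁:ℝ)^2 + (t₁:ℝ)*(t₂:ℝ) + (t₂:ℝ)^2))|
        ≤ C / Real.sqrt ((t₁:ℝ)^2 + (t₂:ℝ)^2) ^ 3 := by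
  have hpi := Real.pi_pos
  have hpilt : π < 3.1416 := Real.pi_lt_d4
  obtain ⟨c₀, hc₀, hfar⟩ := exists_far_bound
  obtain ⟨N₀, hN₀def⟩ : ∃ v : ℝ, v = max 318 (Real.sqrt (2*π^2/(3*c₀)) + 1) := ⟨_, rfl⟩
  have hN₀318 : (318:ℝ) ≤ N₀ := hN₀def ▸ le_max_left _ _
  have hN₀pos : (0:ℝ) < N₀ := by linarith
  refine ⟨(3+4/q)*N₀^3 + 650/q + 1/q^3, by positivity, ?_⟩
  intro t₁ t₂ _hcop hd
  -- setup
  obtain ⟨n2, hn2def⟩ : ∃ v : ℝ, v = (t₁:ℝ)^2 + (t₂:ℝ)^2 := ⟨_, rfl⟩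
  obtain ⟨S, hSdef⟩ : ∃ v : ℝ, v = (t₁:ℝ)^2+(t₁:ℝ)*(t₂:ℝ)+(t₂:ℝ)^2 := ⟨_, rfl⟩
  obtain ⟨Nr, hNdef⟩ : ∃ v : ℝ, v = Real.sqrt n2 := ⟨_, rfl⟩
  rw [← hn2def, ← hSdef, ← hNdef]
  have h1n2 : (1:ℝ) ≤ n2 := by
    have hz : (1:ℤ) ≤ t₁^2 + t₂^2 := by
      rcases eq_or_ne t₁ 0 with h | h
      · have h2 : t₂ ≠ 0 := by intro h2; apply hd; rw [h, h2]; norm_num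
        nlinarith [Int.one_le_abs h2, sq_abs t₂, sq_nonneg t₁]
      · nlinarith [Int.one_le_abs h, sq_abs t₁, sq_nonneg t₂]
    rw [hn2def]; exact_mod_cast hz
  have hSn2 : n2 ≤ 2*S := by
    rw [hSdef, hn2def]; nlinarith only [sq_nonneg ((t₁:ℝ)+(t₂:ℝ))]
  have hSpos : 0 < S := by linarith only [hSn2, h1n2]
  have hNr2 : Nr^2 = n2 := by rw [hNdef]; exact Real.sq_sqrt (by linarith only [h1n2])
  have hNr1 : (1:ℝ) ≤ Nr := by
    rw [hNdef, show (1:ℝ) = Real.sqrt 1 by rw [Real.sqrt_one]]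
    exact Real.sqrt_le_sqrt h1n2
  have hN0 : (0:ℝ) < Nr := by linarith
  have hN3 : (0:ℝ) < Nr^3 := by positivity
  -- basic sInf facts
  have hmem0 : ((0:ℝ),(0:ℝ)) ∈ {k : ℝ × ℝ | ∃ n : ℤ, (t₁ : ℝ) * k.1 + (t₂ : ℝ) * k.2 = 2*π*n} :=
    ⟨0, by push_cast; ring⟩
  have hne : ((fun k : ℝ × ℝ => Real.sqrt (hexSymbol k.1 k.2 + q^2)) ''
      {k : ℝ × ℝ | ∃ n : ℤ, (t₁ : ℝ) * k.1 + (t₂ : ℝ) * k.2 = 2*π*n}).Nonempty :=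
    ⟨_, Set.mem_image_of_mem _ hmem0⟩
  have hlb : ∀ y ∈ (fun k : ℝ × ℝ => Real.sqrt (hexSymbol k.1 k.2 + q^2)) ''
      {k : ℝ × ℝ | ∃ n : ℤ, (t₁ : ℝ) * k.1 + (t₂ : ℝ) * k.2 = 2*π*n}, q ≤ y := by
    rintro y ⟨k, _, rfl⟩
    have h0 := hex_nonneg k.1 k.2
    calc q = Real.sqrt (q^2) := by rw [Real.sqrt_sq hq.le]
      _ ≤ Real.sqrt (hexSymbol k.1 k.2 + q^2) := Real.sqrt_le_sqrt (by linarith)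
  have hbdd : BddBelow ((fun k : ℝ × ℝ => Real.sqrt (hexSymbol k.1 k.2 + q^2)) ''
      {k : ℝ × ℝ | ∃ n : ℤ, (t₁ : ℝ) * k.1 + (t₂ : ℝ) * k.2 = 2*π*n}) :=
    ⟨q, fun y hy => hlb y hy⟩
  have hEps0 : 0 ≤ gapEps q t₁ t₂ := by
    have := le_csInf hne hlb
    rw [gapEps]; linarith
  have hmain0 : 0 ≤ π^2/(6*q*S) := by positivity
  have hπ2 : π^2 ≤ 9.87 := by nlinarith only [hpilt, hpi]
  have hmain4 : π^2/(6*q*S) ≤ 4/q := by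
    rw [div_le_div_iff₀ (by positivity) hq]
    have hqq := mul_le_mul_of_nonneg_right hπ2 hq.le
    have hS12 : (1:ℝ)/2 ≤ S := by linarith
    have h2 := mul_le_mul_of_nonneg_left hS12 hq.le
    nlinarith only [hqq, h2, hq]
  by_cases hreg : N₀ ≤ Nr
  · -- asymptotic regime
    have h318 : (318:ℝ) ≤ Nr := le_trans hN₀318 hreg
    have hn2ge : (100489:ℝ) ≤ n2 := by nlinarith only [h318, hNr2]
    have hcn : 2*π^2 ≤ 3*c₀*n2 := by
      have hs : Real.sqrt (2*π^2/(3*c₀)) ≤ Nr := by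
        have h2 := hN₀def ▸ le_max_right 318 (Real.sqrt (2*π^2/(3*c₀)) + 1)
        linarith [le_trans h2 hreg]
      have h3 : 2*π^2/(3*c₀) ≤ n2 := by
        have h4 := pow_le_pow_left₀ (Real.sqrt_nonneg _) hs 2
        rw [Real.sq_sqrt (by positivity), hNr2] at h4
        exact h4
      rw [div_le_iff₀ (by positivity)] at h3
      linarith
    -- lower bound on gapEps
    obtain ⟨L, hLdef⟩ : ∃ v : ℝ, v = max 0 (π^2/(3*S) - 290/Nr^3) := ⟨_, rfl⟩
    have hL0 : 0 ≤ L := hLdef ▸ le_max_left _ _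
    have hLge : π^2/(3*S) - 290/Nr^3 ≤ L := hLdef ▸ le_max_right _ _
    have hLle : L ≤ 2*π^2/(3*n2) := by
      rw [hLdef]
      apply max_le (by positivity)
      have h1 : π^2/(3*S) ≤ 2*π^2/(3*n2) := by
        rw [div_le_div_iff₀ (by positivity) (by linarith)]
        nlinarith only [hSn2, sq_nonneg π]
      have h2 : (0:ℝ) < 290/Nr^3 := by positivity
      linarith
    have hsinf_lb : Real.sqrt (L + q^2) ≤ sInf ((fun k : ℝ × ℝ =>
        Real.sqrt (hexSymbol k.1 k.2 + q^2)) ''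
        {k : ℝ × ℝ | ∃ n : ℤ, (t₁ : ℝ) * k.1 + (t₂ : ℝ) * k.2 = 2*π*n}) := by
      apply le_csInf hne
      rintro y ⟨k, ⟨n, hkn⟩, rfl⟩
      apply Real.sqrt_le_sqrt
      have hfl := f_lower c₀ hc₀ hfar t₁ t₂ hd (by rw [hn2def] at hn2ge; exact hn2ge)
        (by rw [hn2def] at hcn; exact hcn) k.1 k.2 n hkn
      rw [← hSdef, ← hn2def, ← hNdef] at hfl
      have h0 := hex_nonneg k.1 k.2
      have : L ≤ hexSymbol k.1 k.2 := by
        rw [hLdef]; exact max_le h0 (by linarith)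
      linarith
    have hgap_lb : L/(2*q) - L^2/(8*q^3) ≤ gapEps q t₁ t₂ := by
      have := sqrt_lb hq hL0
      rw [gapEps]; linarith
    -- upper bound on gapEps
    obtain ⟨k₁, k₂, n, hkmem, hkval⟩ := f_upper t₁ t₂ hd (by rw [hn2def] at hn2ge; exact hn2ge)
    rw [← hSdef, ← hn2def, ← hNdef] at hkval
    have hsinf_ub : sInf ((fun k : ℝ × ℝ => Real.sqrt (hexSymbol k.1 k.2 + q^2)) ''
        {k : ℝ × ℝ | ∃ n : ℤ, (t₁ : ℝ) * k.1 + (t₂ : ℝ) * k.2 = 2*π*n})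
        ≤ Real.sqrt (hexSymbol k₁ k₂ + q^2) :=
      csInf_le hbdd ⟨(k₁, k₂), ⟨n, hkmem⟩, rfl⟩
    have hgap_ub : gapEps q t₁ t₂ ≤ (hexSymbol k₁ k₂)/(2*q) := by
      have h0 := hex_nonneg k₁ k₂
      have := sqrt_ub hq h0
      rw [gapEps]; linarith
    -- combine
    rw [abs_le]
    constructor
    · -- main - gapEps ≤ C/Nr³ direction (lower bound of diff)
      have h1 : (π^2/(3*S) - L)/(2*q) ≤ (290/Nr^3)/(2*q) := by gcongr; linarith
      have e1 : (π^2/(3*S) - L)/(2*q) = π^2/(6*q*S) - L/(2*q) := by field_simp; ring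
      have e2 : (290/Nr^3)/(2*q) = (145/q)/Nr^3 := by field_simp; ring
      have hL2 : L^2 ≤ 1/Nr^3 := by
        have ha : L ≤ 6.58/Nr^2 := by
          refine hLle.trans ?_
          rw [← hNr2, div_le_div_iff₀ (by positivity) (by positivity)]
          have := mul_le_mul_of_nonneg_right hπ2 (sq_nonneg Nr)
          linarith only [this]
        have hb : L^2 ≤ (6.58/Nr^2)^2 := by
          apply pow_le_pow_left₀ hL0 ha
        refine hb.trans ?_
        rw [div_pow, div_le_div_iff₀ (by positivity) (by positivity)]
        ring_nf
        nlinarith only [h318, hN3, hN0, sq_nonneg Nr]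
      have h2 : L^2/(8*q^3) ≤ (1/q^3)/Nr^3 := by
        have hq3 : (0:ℝ) < q^3 := by positivity
        have hstep : (1:ℝ)/(8*q^3) ≤ 1/q^3 := by
          rw [div_le_div_iff₀ (by positivity) (by positivity)]
          linarith only [hq3]
        calc L^2/(8*q^3) ≤ (1/Nr^3)/(8*q^3) := by gcongr
          _ = (1/(8*q^3))/Nr^3 := by ring
          _ ≤ (1/q^3)/Nr^3 := by gcongr
      have hsum : π^2/(6*q*S) - gapEps q t₁ t₂ ≤ (145/q)/Nr^3 + (1/q^3)/Nr^3 := by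
        have := hgap_lb
        linarith [e1 ▸ e2 ▸ h1]
      have hCb : (145/q)/Nr^3 + (1/q^3)/Nr^3 ≤ ((3+4/q)*N₀^3 + 650/q + 1/q^3)/Nr^3 := by
        have e4 : (145/q)/Nr^3 + (1/q^3)/Nr^3 = (145/q + 1/q^3)/Nr^3 := by ring
        rw [e4]
        gcongr
        have h4 : (0:ℝ) ≤ (3+4/q)*N₀^3 := by positivity
        have h5 : (145:ℝ)/q ≤ 650/q := by
          rw [div_le_div_iff₀ hq hq]; nlinarith only [hq]
        linarith
      linarith
    · have e3 : (π^2/(3*S) + 1300/Nr^3)/(2*q) = π^2/(6*q*S) + (650/q)/Nr^3 := by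
        field_simp; ring
      have h6 : gapEps q t₁ t₂ ≤ π^2/(6*q*S) + (650/q)/Nr^3 := by
        rw [← e3]
        refine hgap_ub.trans ?_
        gcongr <;> linarith [hkval]
      have hCb : (650/q)/Nr^3 ≤ ((3+4/q)*N₀^3 + 650/q + 1/q^3)/Nr^3 := by
        gcongr
        have h4 : (0:ℝ) ≤ (3+4/q)*N₀^3 := by positivity
        have h5 : (0:ℝ) < 1/q^3 := by positivity
        linarith
      linarith
  · -- small regime
    push_neg at hreg
    have hgap3 : gapEps q t₁ t₂ ≤ 3 := by
      have hval : sInf ((fun k : ℝ × ℝ => Real.sqrt (hexSymbol k.1 k.2 + q^2)) ''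
          {k : ℝ × ℝ | ∃ n : ℤ, (t₁ : ℝ) * k.1 + (t₂ : ℝ) * k.2 = 2*π*n})
          ≤ Real.sqrt (hexSymbol 0 0 + q^2) :=
        csInf_le hbdd ⟨((0:ℝ),(0:ℝ)), hmem0, rfl⟩
      have h9 : hexSymbol 0 0 = 9 := by
        unfold hexSymbol; norm_num
      rw [h9] at hval
      have h10 : Real.sqrt (9 + q^2) ≤ 3 + q := by
        rw [show (9:ℝ) + q^2 = (3+q)^2 - 6*q by ring]
        calc Real.sqrt ((3+q)^2 - 6*q) ≤ Real.sqrt ((3+q)^2) :=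
              Real.sqrt_le_sqrt (by linarith)
          _ = 3 + q := Real.sqrt_sq (by linarith)
      rw [gapEps]; linarith
    have habs : |gapEps q t₁ t₂ - π^2/(6*q*S)| ≤ 3 + 4/q := by
      rw [abs_le]; constructor <;> linarith
    refine habs.trans ?_
    rw [le_div_iff₀ hN3]
    have hNr3 : Nr^3 ≤ N₀^3 := pow_le_pow_left₀ hN0.le hreg.le 3
    have h4q : (0:ℝ) < 3 + 4/q := by positivity
    have h7 : (3+4/q)*Nr^3 ≤ (3+4/q)*N₀^3 := by
      apply mul_le_mul_of_nonneg_left hNr3 h4q.le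
    have h8 : (0:ℝ) < 650/q + 1/q^3 := by positivity
    nlinarith only [h7, h8, hN3, h4q]
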